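/- With notation as in the E₇ setup, let a = (3/4, −1/4, …, −1/4, 3/4) ∈ V₇ and let A = W₇·a be its orbit under the Weyl group W₇ of E₇. Then A has exactly 56 elements, namely all vectors of ℝ^8 obtained by permuting the coordinates of ±(3/4, 3/4, −1/4, −1/4, −1/4, −1/4, −1/4, −1/4); equivalently, A consists of all vectors of V₇ having, up to a global sign, exactly two coordinates equal to 3/4 and six coordinates equal to −1/4. -/

import Mathlib

open scoped RealInnerProductSpace

/-- The linear functional `x ↦ ∑ i, x i` on `ℝ^8`. -/
noncomputable def coordSum8 : EuclideanSpace ℝ (Fin 8) →ₗ[ℝ] ℝ where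
  toFun x := ∑ i, x i
  map_add' x y := by simp [Finset.sum_add_distrib]
  map_smul' c x := by simp [Finset.mul_sum]

/-- The hyperplane `V₇ = {x ∈ ℝ^8 : ∑ x_i = 0}`. -/
noncomputable def V7 : Submodule ℝ (EuclideanSpace ℝ (Fin 8)) :=
  LinearMap.ker coordSum8

/-- The `E₈` root lattice `{x ∈ ℤ^8 ∪ (1/2 + ℤ)^8 : ∑ x_i ∈ 2ℤ}`. -/
def E8lat : Set (EuclideanSpace ℝ (Fin 8)) :=
  {x | ((∀ i, ∃ m : ℤ, x i = (m : ℝ)) ∨ (∀ i, ∃ m : ℤ, x i = (m : ℝ) + 1 / 2)) ∧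
    ∃ m : ℤ, ∑ i, x i = 2 * (m : ℝ)}

/-- The root system `R₇ = {α ∈ E₇ : (α, α) = 2}` of type `E₇`, where `E₇ = E₈ ∩ V₇`. -/
noncomputable def R7 : Set (EuclideanSpace ℝ (Fin 8)) :=
  {α | α ∈ E8lat ∧ α ∈ V7 ∧ ⟪α, α⟫ = 2}

/-- The Weyl group `W₇ ⊂ O(V₇)` of `E₇`, generated by the reflections
`s_α(v) = v − (v, α)α`, `α ∈ R₇`. -/
noncomputable def W7 : Subgroup (V7 ≃ₗᵢ[ℝ] V7) :=
  Subgroup.closure {w | ∃ α ∈ R7, ∀ v : V7,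
    ((w v : EuclideanSpace ℝ (Fin 8))) = (v : EuclideanSpace ℝ (Fin 8)) -
      ⟪(v : EuclideanSpace ℝ (Fin 8)), α⟫ • α}

/-- The vector `a = (3/4, −1/4, −1/4, −1/4, −1/4, −1/4, −1/4, 3/4)`, as an element
of `V₇`. -/
noncomputable def aV : V7 :=
  ⟨WithLp.toLp 2 (![3/4, -1/4, -1/4, -1/4, -1/4, -1/4, -1/4, 3/4] : Fin 8 → ℝ), by
    show coordSum8 _ = 0
    show (∑ i : Fin 8, _) = (0 : ℝ)
    simp only [Fin.sum_univ_succ, Fin.sum_univ_zero, Matrix.cons_val_zero,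
      Matrix.cons_val_succ]
    norm_num⟩

/-- The vector `(3/4, 3/4, −1/4, −1/4, −1/4, −1/4, −1/4, −1/4)`. -/
noncomputable def baseVec : Fin 8 → ℝ :=
  ![3/4, 3/4, -1/4, -1/4, -1/4, -1/4, -1/4, -1/4]

abbrev E := EuclideanSpace ℝ (Fin 8)

lemma inner8 (x y : E) : ⟪x, y⟫ = ∑ i, x i * y i := by
  simp [PiLp.inner_apply, RCLike.inner_apply, conj_trivial, mul_comm]

lemma coordSum8_apply (x : E) : coordSum8 x = ∑ i, x i := rfl

lemma mem_V7 (x : E) : x ∈ V7 ↔ ∑ i, x i = 0 := by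
  simp [V7, LinearMap.mem_ker, coordSum8_apply]

noncomputable def reflMap (α : E) : E →ₗ[ℝ] E where
  toFun v := v - ⟪v, α⟫ • α
  map_add' u v := by
    simp only [inner_add_left, add_smul]
    abel
  map_smul' c v := by
    simp only [inner_smul_left, conj_trivial, RingHom.id_apply, smul_sub, smul_smul]

lemma reflMap_apply (α v : E) : reflMap α v = v - ⟪v, α⟫ • α := rfl

lemma reflMap_invol (α : E) (h2 : ⟪α, α⟫ = 2) : Function.Involutive (reflMap α) := by
  intro v
  simp only [reflMap_apply, inner_sub_left, real_inner_smul_left, h2]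
  module

lemma reflMap_inner_self (α : E) (h2 : ⟪α, α⟫ = 2) (v : E) :
    ⟪reflMap α v, reflMap α v⟫ = ⟪v, v⟫ := by
  simp only [reflMap_apply, inner_sub_left, inner_sub_right, real_inner_smul_left,
    real_inner_smul_right, h2, real_inner_comm v α]
  ring

lemma reflMap_memV7 (α : E) (h0 : α ∈ V7) (v : E) (hv : v ∈ V7) : reflMap α v ∈ V7 := by
  simp only [V7, LinearMap.mem_ker] at h0 hv ⊢
  rw [reflMap_apply, map_sub, map_smul, h0, hv, smul_zero, sub_zero]

noncomputable def reflVL (α : E) (h0 : α ∈ V7) : V7 →ₗ[ℝ] V7 :=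
  (reflMap α).restrict (fun v hv => reflMap_memV7 α h0 v hv)

lemma reflVL_coe (α : E) (h0 : α ∈ V7) (v : V7) :
    ((reflVL α h0 v : E)) = reflMap α (v : E) := rfl

lemma reflVL_invol (α : E) (h0 : α ∈ V7) (h2 : ⟪α, α⟫ = 2) :
    Function.Involutive (reflVL α h0) := by
  intro v
  apply Subtype.ext
  rw [reflVL_coe, reflVL_coe]
  exact reflMap_invol α h2 (v : E)

noncomputable def reflV (α : E) (h0 : α ∈ V7) (h2 : ⟪α, α⟫ = 2) : V7 ≃ₗᵢ[ℝ] V7 :=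
  { toLinearEquiv := LinearEquiv.ofInvolutive (reflVL α h0) (reflVL_invol α h0 h2)
    norm_map' := by
      intro v
      show ‖reflVL α h0 v‖ = ‖v‖
      rw [Submodule.coe_norm, Submodule.coe_norm, reflVL_coe]
      have h1 := real_inner_self_eq_norm_sq (reflMap α (v : E))
      have h2' := real_inner_self_eq_norm_sq (v : E)
      have h := reflMap_inner_self α h2 (v : E)
      nlinarith [norm_nonneg (reflMap α (v : E)), norm_nonneg (v : E)] }

lemma reflV_apply (α : E) (h0 : α ∈ V7) (h2 : ⟪α, α⟫ = 2) (v : V7) :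
    ((reflV α h0 h2 v : E)) = (v : E) - ⟪(v : E), α⟫ • α := rfl

lemma reflV_mem_W7 (α : E) (hα : α ∈ R7) :
    reflV α hα.2.1 hα.2.2 ∈ W7 :=
  Subgroup.subset_closure ⟨α, hα, fun v => reflV_apply α hα.2.1 hα.2.2 v⟩

/-- residue class description -/
def resid (r : ℝ) (x : E) : Prop := ∀ i, ∃ m : ℤ, x i = m + r

def PresQ (x : E) : Prop := resid (3/4) x ∨ resid (1/4) x

noncomputable def Sv : Set V7 :=
  {x | PresQ (x : E) ∧ ⟪(x : E), (x : E)⟫ = (3/2 : ℝ)}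

lemma inner_int (x α : E) (m : Fin 8 → ℤ) (r : ℝ) (hx : ∀ i, x i = m i + r)
    (a : Fin 8 → ℤ) (ha : ∀ i, α i = a i) (hsa : ∑ i, α i = 0) :
    ⟪x, α⟫ = ((∑ i, m i * a i : ℤ) : ℝ) := by
  rw [inner8]
  have h1 : ∀ i, x i * α i = (m i : ℝ) * (a i : ℝ) + r * (a i : ℝ) := by
    intro i; rw [hx i, ha i]; ring
  rw [Finset.sum_congr rfl fun i _ => h1 i, Finset.sum_add_distrib, ← Finset.mul_sum]
  have h2 : ∑ i, ((a i : ℝ)) = 0 := by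
    rw [← hsa]; exact Finset.sum_congr rfl fun i _ => (ha i).symm
  push_cast
  rw [h2, mul_zero, add_zero]

lemma inner_half (x α : E) (m : Fin 8 → ℤ) (r : ℝ) (hx : ∀ i, x i = m i + r)
    (hr : r = 3/4 ∨ r = 1/4) (hsx : ∑ i, x i = 0)
    (b : Fin 8 → ℤ) (hb : ∀ i, α i = b i + 1/2) (hsa : ∑ i, α i = 0) :
    ∃ cz : ℤ, ⟪x, α⟫ = (cz : ℝ) := by
  -- ∑ m i = -8r ∈ {-6, -2}
  have hsm : ((∑ i, m i : ℤ) : ℝ) = - (8 * r) := by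
    have : ∑ i, x i = ((∑ i, m i : ℤ) : ℝ) + 8 * r := by
      rw [Finset.sum_congr rfl fun i _ => hx i, Finset.sum_add_distrib,
        Finset.sum_const, Finset.card_univ]
      push_cast [nsmul_eq_mul]; norm_num
    rw [this] at hsx; linarith
  have hsb : ((∑ i, b i : ℤ) : ℝ) = - 4 := by
    have : ∑ i, α i = ((∑ i, b i : ℤ) : ℝ) + 4 := by
      rw [Finset.sum_congr rfl fun i _ => hb i, Finset.sum_add_distrib,
        Finset.sum_const, Finset.card_univ]
      push_cast [nsmul_eq_mul]; norm_num
    rw [this] at hsa; linarith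
  have key : ⟪x, α⟫ = ((∑ i, m i * b i : ℤ) : ℝ) + ((∑ i, m i : ℤ) : ℝ) / 2
      + r * (((∑ i, b i : ℤ) : ℝ) + 4) := by
    rw [inner8]
    have h1 : ∀ i, x i * α i =
        (m i : ℝ) * (b i : ℝ) + (m i : ℝ) / 2 + r * ((b i : ℝ) + 1/2) := by
      intro i; rw [hx i, hb i]; ring
    have e1 : ∑ i : Fin 8, ((b i : ℝ) + 1/2) = ((∑ i, b i : ℤ) : ℝ) + 4 := by
      rw [Finset.sum_add_distrib, Finset.sum_const, Finset.card_univ]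
      push_cast [nsmul_eq_mul]; norm_num
    rw [Finset.sum_congr rfl fun i _ => h1 i, Finset.sum_add_distrib,
      Finset.sum_add_distrib, ← Finset.sum_div, ← Finset.mul_sum, e1]
    push_cast
    ring
  rw [hsb] at key
  rcases hr with hr | hr
  · refine ⟨(∑ i, m i * b i) + (-3), ?_⟩
    have h6 : ((∑ i, m i : ℤ) : ℝ) = -6 := by rw [hsm, hr]; norm_num
    rw [key, h6]; push_cast; ring
  · refine ⟨(∑ i, m i * b i) + (-1), ?_⟩
    have h2 : ((∑ i, m i : ℤ) : ℝ) = -2 := by rw [hsm, hr]; norm_num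
    rw [key, h2]; push_cast; ring

def genW : Set (V7 ≃ₗᵢ[ℝ] V7) := {w | ∃ α ∈ R7, ∀ v : V7,
    ((w v : EuclideanSpace ℝ (Fin 8))) = (v : EuclideanSpace ℝ (Fin 8)) -
      ⟪(v : EuclideanSpace ℝ (Fin 8)), α⟫ • α}

lemma W7_eq : W7 = Subgroup.closure genW := rfl

lemma sub_smul_apply (x α : E) (c : ℝ) (i : Fin 8) :
    (x - c • α) i = x i - c * α i := rfl

lemma resid_sub (x α : E) (r : ℝ) (hr : r = 3/4 ∨ r = 1/4) (hx : resid r x)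
    (hsx : ∑ i, x i = 0) (hα : α ∈ E8lat) (hsa : ∑ i, α i = 0) :
    PresQ (x - ⟪x, α⟫ • α) := by
  choose m hm using hx
  rcases hα.1 with hint | hhalf
  · -- integer coordinates
    choose a ha using hint
    have hc := inner_int x α m r hm a ha hsa
    have : resid r (x - ⟪x, α⟫ • α) := by
      intro i
      refine ⟨m i - (∑ j, m j * a j) * a i, ?_⟩
      rw [sub_smul_apply, hm i, ha i, hc]
      push_cast; ring
    rcases hr with hr | hr
    · exact Or.inl (hr ▸ this)
    · exact Or.inr (hr ▸ this)
  · choose b hb using hhalf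
    obtain ⟨cz, hc⟩ := inner_half x α m r hm hr hsx b hb hsa
    rcases Int.even_or_odd cz with ⟨k, hk⟩ | ⟨k, hk⟩
    · have : resid r (x - ⟪x, α⟫ • α) := by
        intro i
        refine ⟨m i - cz * b i - k, ?_⟩
        rw [sub_smul_apply, hm i, hb i, hc, hk]
        push_cast; ring
      rcases hr with hr | hr
      · exact Or.inl (hr ▸ this)
      · exact Or.inr (hr ▸ this)
    · rcases hr with hr | hr
      · refine Or.inr (fun i => ⟨m i - cz * b i - k, ?_⟩)
        rw [sub_smul_apply, hm i, hb i, hc, hk, hr]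
        push_cast; ring
      · refine Or.inl (fun i => ⟨m i - cz * b i - k - 1, ?_⟩)
        rw [sub_smul_apply, hm i, hb i, hc, hk, hr]
        push_cast; ring

lemma inner_coe_W7 (w : V7 ≃ₗᵢ[ℝ] V7) (x : V7) :
    ⟪((w x : E)), ((w x : E))⟫ = ⟪(x : E), (x : E)⟫ := by
  rw [real_inner_self_eq_norm_sq, real_inner_self_eq_norm_sq,
    ← Submodule.coe_norm, ← Submodule.coe_norm, w.norm_map]

lemma gen_preserves {w : V7 ≃ₗᵢ[ℝ] V7} (hw : w ∈ genW) :
    ∀ x ∈ Sv, w x ∈ Sv := by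
  rintro x ⟨hres, hnorm⟩
  obtain ⟨α, hα, hform⟩ := hw
  constructor
  · rw [hform x]
    have hsx : ∑ i, (x : E) i = 0 := (mem_V7 _).1 x.2
    have hsa : ∑ i, α i = 0 := (mem_V7 _).1 hα.2.1
    rcases hres with h | h
    · exact resid_sub _ _ _ (Or.inl rfl) h hsx hα.1 hsa
    · exact resid_sub _ _ _ (Or.inr rfl) h hsx hα.1 hsa
  · rw [inner_coe_W7, hnorm]

lemma gen_invol {w : V7 ≃ₗᵢ[ℝ] V7} (hw : w ∈ genW) : w * w = 1 := by
  obtain ⟨α, hα, hform⟩ := hw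
  have h2 := hα.2.2
  ext v
  have : ((w (w v) : E)) = ((v : E)) := by
    rw [hform (w v), hform v]
    simp only [inner_sub_left, real_inner_smul_left, h2]
    module
  simpa using congrFun (congrArg (fun y : E => (y : Fin 8 → ℝ)) this) _

lemma W7_act_Sv {w : V7 ≃ₗᵢ[ℝ] V7} (hw : w ∈ W7) : ∀ x ∈ Sv, w x ∈ Sv := by
  have hw' : w ∈ Submonoid.closure (genW ∪ genW⁻¹) := by
    rw [← Subgroup.closure_toSubmonoid]
    exact hw
  clear hw
  induction hw' using Submonoid.closure_induction with
  | mem u hu =>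
    rcases hu with hu | hu
    · exact gen_preserves hu
    · have hu' : u⁻¹ ∈ genW := hu
      have : u = u⁻¹ := by
        have := gen_invol hu'
        rw [← eq_inv_iff_mul_eq_one] at this
        rw [this, inv_inv]
      rw [this]
      exact gen_preserves hu'
  | one => intro x hx; simpa using hx
  | mul u1 u2 hu1 hu2 pu1 pu2 =>
    intro x hx
    have : (u1 * u2) x = u1 (u2 x) := rfl
    rw [this]
    exact pu1 _ (pu2 x hx)

lemma sum_ite_mem8 (T : Finset (Fin 8)) (a b : ℝ) :
    ∑ k, (if k ∈ T then a else b) = T.card * a + ((8 : ℝ) - T.card) * b := by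
  rw [Finset.sum_ite, Finset.sum_const, Finset.sum_const]
  have h1 : Finset.univ.filter (fun k => k ∈ T) = T := by
    ext k; simp
  have h2 : (Finset.univ.filter (fun k => ¬ k ∈ T)).card = 8 - T.card := by
    rw [Finset.filter_not, Finset.card_sdiff_of_subset (by simp [h1, Finset.subset_univ])]
    simp [h1]
  rw [h1, h2]
  have hle : T.card ≤ 8 := by
    have := Finset.card_le_card (Finset.subset_univ T)
    simpa using this
  rw [nsmul_eq_mul, nsmul_eq_mul]
  push_cast [Nat.cast_sub hle]
  ring

noncomputable def vtx (s : ℝ) (i j : Fin 8) : E :=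
  WithLp.toLp 2 (fun k => if k = i ∨ k = j then s * (3/4) else s * (-1/4))

lemma vtx_apply (s : ℝ) (i j k : Fin 8) :
    vtx s i j k = if k = i ∨ k = j then s * (3/4) else s * (-1/4) := rfl

lemma vtx_eq_ite_mem (s : ℝ) (i j k : Fin 8) :
    vtx s i j k = if k ∈ ({i, j} : Finset (Fin 8)) then s * (3/4) else s * (-1/4) := by
  simp [vtx, Finset.mem_insert, Finset.mem_singleton]

lemma card_pair8 (i j : Fin 8) (hij : i ≠ j) : ({i, j} : Finset (Fin 8)).card = 2 := by
  rw [Finset.card_insert_of_notMem (by simp [hij]), Finset.card_singleton]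

lemma vtx_memV7 (s : ℝ) (i j : Fin 8) (hij : i ≠ j) : vtx s i j ∈ V7 := by
  rw [mem_V7]
  have : ∀ k, vtx s i j k = if k ∈ ({i, j} : Finset (Fin 8)) then s * (3/4)
      else s * (-1/4) := vtx_eq_ite_mem s i j
  rw [Finset.sum_congr rfl fun k _ => this k, sum_ite_mem8, card_pair8 i j hij]
  norm_num
  ring

noncomputable def vtxV (s : ℝ) (i j : Fin 8) (hij : i ≠ j) : V7 :=
  ⟨vtx s i j, vtx_memV7 s i j hij⟩

lemma vtx_inner (s : ℝ) (hs : s = 1 ∨ s = -1) (i j : Fin 8) (hij : i ≠ j) :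
    ⟪vtx s i j, vtx s i j⟫ = (3/2 : ℝ) := by
  rw [inner8]
  have hs2 : s * s = 1 := by rcases hs with h | h <;> rw [h] <;> norm_num
  have : ∀ k, vtx s i j k * vtx s i j k =
      if k ∈ ({i, j} : Finset (Fin 8)) then (9/16 : ℝ) else 1/16 := by
    intro k
    rw [vtx_eq_ite_mem]
    split_ifs <;> nlinarith
  rw [Finset.sum_congr rfl fun k _ => this k, sum_ite_mem8, card_pair8 i j hij]
  norm_num

lemma vtx_resid (s : ℝ) (hs : s = 1 ∨ s = -1) (i j : Fin 8) :
    PresQ (vtx s i j) := by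
  rcases hs with h | h
  · refine Or.inl (fun k => ⟨if k = i ∨ k = j then 0 else -1, ?_⟩)
    simp only [vtx_apply, h]
    split_ifs <;> norm_num
  · refine Or.inr (fun k => ⟨if k = i ∨ k = j then -1 else 0, ?_⟩)
    simp only [vtx_apply, h]
    split_ifs <;> norm_num

lemma vtxV_mem_Sv (s : ℝ) (hs : s = 1 ∨ s = -1) (i j : Fin 8) (hij : i ≠ j) :
    vtxV s i j hij ∈ Sv :=
  ⟨vtx_resid s hs i j, vtx_inner s hs i j hij⟩

lemma coord_bound (x : E) (hnorm : ∑ k, x k * x k = 3/2)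
    (hlow : ∀ k, 1/16 ≤ x k * x k) (k : Fin 8) : x k * x k ≤ 17/16 := by
  have h := Finset.sum_erase_add Finset.univ (fun k => x k * x k) (Finset.mem_univ k)
  have hcard : (Finset.univ.erase k).card = 7 := by
    rw [Finset.card_erase_of_mem (Finset.mem_univ k)]
    simp
  have hge : ((Finset.univ.erase k).card : ℕ) • ((1:ℝ)/16) ≤
      ∑ j ∈ Finset.univ.erase k, x j * x j :=
    Finset.card_nsmul_le_sum _ _ _ (fun j _ => hlow j)
  rw [hcard, nsmul_eq_mul] at hge
  push_cast at hge
  rw [hnorm] at h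
  linarith

lemma Sv_shape (x : V7) (hx : x ∈ Sv) :
    ∃ s : ℝ, (s = 1 ∨ s = -1) ∧ ∃ i j : Fin 8, i ≠ j ∧
      ∀ k, (x : E) k = vtx s i j k := by
  obtain ⟨hres, hnorm⟩ := hx
  have hsum : ∑ k, (x : E) k = 0 := (mem_V7 _).1 x.2
  have hnorm' : ∑ k, (x : E) k * (x : E) k = 3/2 := by rw [← inner8]; exact hnorm
  rcases hres with h | h
  · -- residue 3/4 : s = 1
    choose m hm using h
    have hlow : ∀ k, 1/16 ≤ (x : E) k * (x : E) k := by
      intro k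
      rcases le_or_gt (m k) (-1) with h1 | h1
      · have : (x : E) k ≤ -1/4 := by
          rw [hm k]
          have : ((m k : ℝ)) ≤ -1 := by exact_mod_cast h1
          linarith
        nlinarith
      · have h1' : (0 : ℤ) ≤ m k := by omega
        have : (3:ℝ)/4 ≤ (x : E) k := by
          rw [hm k]
          have : (0:ℝ) ≤ ((m k : ℝ)) := by exact_mod_cast h1'
          linarith
        nlinarith
    have hmk : ∀ k, m k = 0 ∨ m k = -1 := by
      intro k
      have hb := coord_bound _ hnorm' hlow k
      rw [hm k] at hb
      have h1 : ((m k : ℝ)) < 1/2 := by nlinarith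
      have h2 : (-2 : ℝ) < ((m k : ℝ)) := by nlinarith
      have h1' : m k < 1 := by
        have : ((m k : ℝ)) < 1 := by linarith
        exact_mod_cast this
      have h2' : (-2 : ℤ) < m k := by
        have : ((-2 : ℤ) : ℝ) < ((m k : ℝ)) := by push_cast; linarith
        exact_mod_cast this
      omega
    set T : Finset (Fin 8) := Finset.univ.filter (fun k => m k = 0) with hT
    have hxT : ∀ k, (x : E) k = if k ∈ T then (3:ℝ)/4 else -1/4 := by
      intro k
      rw [hm k]
      by_cases hk : k ∈ T
      · have : m k = 0 := by simpa [hT] using hk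
        rw [this]; simp [hk]
      · have : m k = -1 := by
          rcases hmk k with h0 | h1
          · exact absurd (by simpa [hT] using h0) hk
          · exact h1
        rw [this]; simp [hk]; norm_num
    have hcardT : T.card = 2 := by
      have := hsum
      rw [Finset.sum_congr rfl fun k _ => hxT k, sum_ite_mem8] at this
      have hc : (T.card : ℝ) = 2 := by linarith
      exact_mod_cast hc
    obtain ⟨i, j, hij, hTij⟩ := Finset.card_eq_two.1 hcardT
    refine ⟨1, Or.inl rfl, i, j, hij, fun k => ?_⟩
    rw [hxT k, vtx_eq_ite_mem, hTij]
    split_ifs <;> norm_num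
  · -- residue 1/4 : s = -1
    choose m hm using h
    have hlow : ∀ k, 1/16 ≤ (x : E) k * (x : E) k := by
      intro k
      rcases le_or_gt (m k) (-1) with h1 | h1
      · have : (x : E) k ≤ -3/4 := by
          rw [hm k]
          have : ((m k : ℝ)) ≤ -1 := by exact_mod_cast h1
          linarith
        nlinarith
      · have h1' : (0 : ℤ) ≤ m k := by omega
        have : (1:ℝ)/4 ≤ (x : E) k := by
          rw [hm k]
          have : (0:ℝ) ≤ ((m k : ℝ)) := by exact_mod_cast h1'
          linarith
        nlinarith
    have hmk : ∀ k, m k = 0 ∨ m k = -1 := by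
      intro k
      have hb := coord_bound _ hnorm' hlow k
      rw [hm k] at hb
      have h1' : m k < 1 := by
        have : ((m k : ℝ)) < 1 := by nlinarith
        exact_mod_cast this
      have h2' : (-2 : ℤ) < m k := by
        have : ((-2 : ℤ) : ℝ) < ((m k : ℝ)) := by push_cast; nlinarith
        exact_mod_cast this
      omega
    set T : Finset (Fin 8) := Finset.univ.filter (fun k => m k = -1) with hT
    have hxT : ∀ k, (x : E) k = if k ∈ T then (-3:ℝ)/4 else 1/4 := by
      intro k
      rw [hm k]
      by_cases hk : k ∈ T
      · have : m k = -1 := by simpa [hT] using hk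
        rw [this]; simp [hk]; norm_num
      · have : m k = 0 := by
          rcases hmk k with h0 | h1
          · exact h0
          · exact absurd (by simpa [hT] using h1) hk
        rw [this]; simp [hk]
    have hcardT : T.card = 2 := by
      have := hsum
      rw [Finset.sum_congr rfl fun k _ => hxT k, sum_ite_mem8] at this
      have hc : (T.card : ℝ) = 2 := by linarith
      exact_mod_cast hc
    obtain ⟨i, j, hij, hTij⟩ := Finset.card_eq_two.1 hcardT
    refine ⟨-1, Or.inr rfl, i, j, hij, fun k => ?_⟩
    rw [hxT k, vtx_eq_ite_mem, hTij]
    split_ifs <;> norm_num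


lemma aV_eq : aV = vtxV 1 0 7 (by decide) := by
  apply Subtype.ext
  ext k
  show (![3/4, -1/4, -1/4, -1/4, -1/4, -1/4, -1/4, 3/4] : Fin 8 → ℝ) k = vtx 1 0 7 k
  fin_cases k <;>
    simp only [vtx_apply, Matrix.cons_val_succ, Matrix.cons_val_zero, Matrix.cons_val_one,
      Matrix.vecHead, Matrix.vecTail] <;>
    norm_num [Fin.ext_iff, show ((7:Fin 8):ℕ) = 7 from rfl]

noncomputable def alphaSwap (p q : Fin 8) : E :=
  WithLp.toLp 2 (fun k => (if k = p then (1:ℝ) else 0) - (if k = q then 1 else 0))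

lemma alphaSwap_apply (p q k : Fin 8) :
    alphaSwap p q k = (if k = p then (1:ℝ) else 0) - (if k = q then 1 else 0) := rfl

lemma alphaSwap_sum (p q : Fin 8) : ∑ k, alphaSwap p q k = 0 := by
  simp only [alphaSwap_apply]
  rw [Finset.sum_sub_distrib, Finset.sum_ite_eq' Finset.univ p (fun _ => (1:ℝ)),
    Finset.sum_ite_eq' Finset.univ q (fun _ => (1:ℝ))]
  simp

lemma alphaSwap_mem_R7 (p q : Fin 8) (hpq : p ≠ q) : alphaSwap p q ∈ R7 := by
  refine ⟨⟨Or.inl fun k => ⟨(if k = p then 1 else 0) - (if k = q then 1 else 0), ?_⟩,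
    ⟨0, by rw [alphaSwap_sum]; norm_num⟩⟩, (mem_V7 _).2 (alphaSwap_sum p q), ?_⟩
  · simp only [alphaSwap_apply]; split_ifs <;> norm_num
  · rw [inner8]
    have : ∀ k, alphaSwap p q k * alphaSwap p q k =
        (if k = p then (1:ℝ) else 0) + (if k = q then 1 else 0) := by
      intro k
      simp only [alphaSwap_apply]
      rcases eq_or_ne k p with h | h <;> rcases eq_or_ne k q with h' | h'
      · exact absurd (h ▸ h') hpq
      · simp [h, h', hpq, hpq.symm]
      · simp [h, h', hpq, hpq.symm]
      · simp [h, h']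
    rw [Finset.sum_congr rfl fun k _ => this k, Finset.sum_add_distrib,
      Finset.sum_ite_eq' Finset.univ p (fun _ => (1:ℝ)),
      Finset.sum_ite_eq' Finset.univ q (fun _ => (1:ℝ))]
    simp
    norm_num

lemma inner_alphaSwap (v : E) (p q : Fin 8) : ⟪v, alphaSwap p q⟫ = v p - v q := by
  rw [inner8]
  simp only [alphaSwap_apply]
  have : ∀ k, v k * ((if k = p then (1:ℝ) else 0) - (if k = q then 1 else 0)) =
      (if k = p then v k else 0) - (if k = q then v k else 0) := by
    intro k; split_ifs <;> ring
  rw [Finset.sum_congr rfl fun k _ => this k, Finset.sum_sub_distrib,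
    Finset.sum_ite_eq' Finset.univ p v, Finset.sum_ite_eq' Finset.univ q v]
  simp

lemma reflV_swap_apply (p q : Fin 8) (hpq : p ≠ q) (v : V7) (k : Fin 8) :
    ((reflV (alphaSwap p q) (alphaSwap_mem_R7 p q hpq).2.1
      (alphaSwap_mem_R7 p q hpq).2.2 v : E)) k = (v : E) (Equiv.swap p q k) := by
  rw [reflV_apply, sub_smul_apply, inner_alphaSwap]
  simp only [alphaSwap_apply]
  rcases eq_or_ne k p with h | h <;> rcases eq_or_ne k q with h' | h'
  · subst h; rw [h'] at hpq ⊢; exact absurd rfl hpq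
  · subst h; rw [Equiv.swap_apply_left]; simp [h', hpq]; try ring
  · subst h'; rw [Equiv.swap_apply_right]; simp [h, hpq.symm]; try ring
  · rw [Equiv.swap_apply_of_ne_of_ne h h']; simp [h, h']

noncomputable def Orb : Set V7 := {x | ∃ w ∈ W7, w aV = x}

lemma Orb_aV : aV ∈ Orb := ⟨1, one_mem _, rfl⟩

lemma Orb_act {w : V7 ≃ₗᵢ[ℝ] V7} (hw : w ∈ W7) {x : V7} (hx : x ∈ Orb) :
    w x ∈ Orb := by
  obtain ⟨w', hw', rfl⟩ := hx
  exact ⟨w * w', mul_mem hw hw', rfl⟩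

lemma vtx_comp_swap (s : ℝ) (i j p q k : Fin 8) :
    vtx s i j (Equiv.swap p q k) =
      vtx s (Equiv.swap p q i) (Equiv.swap p q j) k := by
  rw [vtx_apply, vtx_apply]
  have h1 : (Equiv.swap p q k = i) ↔ (k = Equiv.swap p q i) := by
    rw [Equiv.apply_eq_iff_eq_symm_apply, Equiv.symm_swap]
  have h2 : (Equiv.swap p q k = j) ↔ (k = Equiv.swap p q j) := by
    rw [Equiv.apply_eq_iff_eq_symm_apply, Equiv.symm_swap]
  rw [if_congr (or_congr h1 h2) rfl rfl]

lemma swap_ne (p q i j : Fin 8) (hij : i ≠ j) :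
    Equiv.swap p q i ≠ Equiv.swap p q j :=
  fun h => hij ((Equiv.swap p q).injective h)

lemma Orb_swap {s : ℝ} {i j : Fin 8} {hij : i ≠ j}
    (h : vtxV s i j hij ∈ Orb) (p q : Fin 8) (hpq : p ≠ q) :
    vtxV s (Equiv.swap p q i) (Equiv.swap p q j) (swap_ne p q i j hij) ∈ Orb := by
  have hmem := reflV_mem_W7 (alphaSwap p q) (alphaSwap_mem_R7 p q hpq)
  have := Orb_act hmem h
  convert this using 1
  apply Subtype.ext
  ext k
  rw [reflV_swap_apply p q hpq]
  show vtx s (Equiv.swap p q i) (Equiv.swap p q j) k = vtx s i j (Equiv.swap p q k)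
  rw [vtx_comp_swap]

lemma Orb_swap' (s : ℝ) (i j : Fin 8)
    (hO : ∀ h : i ≠ j, vtxV s i j h ∈ Orb) (p q : Fin 8) :
    ∀ h' : Equiv.swap p q i ≠ Equiv.swap p q j,
      vtxV s (Equiv.swap p q i) (Equiv.swap p q j) h' ∈ Orb := by
  intro h'
  rcases eq_or_ne p q with rfl | hpq
  · have e : Equiv.swap p p = Equiv.refl (Fin 8) := Equiv.swap_self p
    have ei : Equiv.swap p p i = i := by rw [e]; rfl
    have ej : Equiv.swap p p j = j := by rw [e]; rfl
    have hij : i ≠ j := by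
      intro hcon; exact h' (by rw [ei, ej, hcon])
    convert hO hij using 2
  · have hij : i ≠ j := fun hcon => h' (by rw [hcon])
    exact Orb_swap (hO hij) p q hpq

lemma Orb_reach (s : ℝ) (i0 j0 : Fin 8) (hi0 : i0 ≠ j0)
    (h : ∀ h0 : i0 ≠ j0, vtxV s i0 j0 h0 ∈ Orb) :
    ∀ (i j : Fin 8) (hij : i ≠ j), vtxV s i j hij ∈ Orb := by
  intro i j hij
  have s1 := Orb_swap' s i0 j0 h i0 i
  rw [Equiv.swap_apply_left] at s1
  have hj1 : Equiv.swap i0 i j0 ≠ i := by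
    intro hcon
    apply hi0
    apply (Equiv.swap i0 i).injective
    rw [hcon, Equiv.swap_apply_left]
  have s2 := Orb_swap' s i (Equiv.swap i0 i j0) (fun h' => s1 h')
      (Equiv.swap i0 i j0) j
  rw [Equiv.swap_apply_left,
    Equiv.swap_apply_of_ne_of_ne (Ne.symm hj1) hij] at s2
  exact s2 hij

noncomputable def aH : E := WithLp.toLp 2 (![1/2,1/2,1/2,1/2,-1/2,-1/2,-1/2,-1/2] : Fin 8 → ℝ)

lemma aH_sum : ∑ k, aH k = 0 := by
  simp only [Fin.sum_univ_succ, Fin.sum_univ_zero, aH, WithLp.ofLp_toLp, Matrix.cons_val_zero,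
    Matrix.cons_val_succ]
  norm_num

lemma aH_mem_R7 : aH ∈ R7 := by
  refine ⟨⟨Or.inr ?_, ⟨0, by rw [aH_sum]; norm_num⟩⟩, (mem_V7 _).2 aH_sum, ?_⟩
  · intro i
    fin_cases i <;>
      [exact ⟨0, by norm_num [aH]⟩; exact ⟨0, by norm_num [aH]⟩; exact ⟨0, by norm_num [aH]⟩;
       exact ⟨0, by norm_num [aH]⟩; exact ⟨-1, by norm_num [aH]⟩; exact ⟨-1, by norm_num [aH]⟩;
       exact ⟨-1, by norm_num [aH]⟩; exact ⟨-1, by norm_num [aH]⟩]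
  · rw [inner8]
    simp only [Fin.sum_univ_succ, Fin.sum_univ_zero, aH, WithLp.ofLp_toLp, Matrix.cons_val_zero,
      Matrix.cons_val_succ]
    norm_num

lemma inner_vtx23_aH : ⟪vtx 1 2 3, aH⟫ = 1 := by
  rw [inner8]
  simp only [Fin.sum_univ_succ, Fin.sum_univ_zero, vtx_apply, aH, WithLp.ofLp_toLp, Matrix.cons_val_zero,
    Matrix.cons_val_succ]
  norm_num [Fin.ext_iff, show ((0:Fin 8):ℕ) = 0 from rfl, show ((1:Fin 8):ℕ) = 1 from rfl, show ((2:Fin 8):ℕ) = 2 from rfl, show ((3:Fin 8):ℕ) = 3 from rfl, show ((4:Fin 8):ℕ) = 4 from rfl, show ((5:Fin 8):ℕ) = 5 from rfl, show ((6:Fin 8):ℕ) = 6 from rfl, show ((7:Fin 8):ℕ) = 7 from rfl]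

lemma Orb_sign : ∀ h01 : (0 : Fin 8) ≠ 1, vtxV (-1) 0 1 h01 ∈ Orb := by
  intro h01
  have h23 : (2 : Fin 8) ≠ 3 := by decide
  have hv23 : vtxV 1 2 3 h23 ∈ Orb :=
    Orb_reach 1 0 7 (by decide) (fun h0 => by rw [← aV_eq]; exact Orb_aV) 2 3 h23
  have hmem := reflV_mem_W7 aH aH_mem_R7
  have := Orb_act hmem hv23
  convert this using 1
  apply Subtype.ext
  ext k
  rw [reflV_apply]
  show vtx (-1) 0 1 k = (vtx 1 2 3 - ⟪(vtx 1 2 3 : E), aH⟫ • aH) k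
  rw [sub_smul_apply, inner_vtx23_aH]
  fin_cases k <;>
    simp only [vtx_apply, aH, WithLp.ofLp_toLp, Matrix.cons_val_zero, Matrix.cons_val_succ] <;>
    norm_num [Fin.ext_iff, show ((0:Fin 8):ℕ) = 0 from rfl, show ((1:Fin 8):ℕ) = 1 from rfl, show ((2:Fin 8):ℕ) = 2 from rfl, show ((3:Fin 8):ℕ) = 3 from rfl, show ((4:Fin 8):ℕ) = 4 from rfl, show ((5:Fin 8):ℕ) = 5 from rfl, show ((6:Fin 8):ℕ) = 6 from rfl, show ((7:Fin 8):ℕ) = 7 from rfl]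

lemma Orb_vtx (s : ℝ) (hs : s = 1 ∨ s = -1) (i j : Fin 8) (hij : i ≠ j) :
    vtxV s i j hij ∈ Orb := by
  rcases hs with rfl | rfl
  · exact Orb_reach 1 0 7 (by decide) (fun h0 => by rw [← aV_eq]; exact Orb_aV) i j hij
  · exact Orb_reach (-1) 0 1 (by decide) Orb_sign i j hij

lemma aV_mem_Sv : aV ∈ Sv := by
  rw [aV_eq]; exact vtxV_mem_Sv 1 (Or.inl rfl) 0 7 (by decide)

lemma Orb_eq_Sv : Orb = Sv := by
  apply Set.Subset.antisymm
  · rintro x ⟨w, hw, rfl⟩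
    exact W7_act_Sv hw aV aV_mem_Sv
  · intro x hx
    obtain ⟨s, hs, i, j, hij, hk⟩ := Sv_shape x hx
    have : x = vtxV s i j hij := Subtype.ext (PiLp.ext hk)
    rw [this]
    exact Orb_vtx s hs i j hij

noncomputable def Phi : Bool × Fin 8 × Fin 8 → V7 := fun p =>
  if h : p.2.1 ≠ p.2.2 then vtxV (if p.1 then 1 else -1) p.2.1 p.2.2 h else aV

def DD : Finset (Bool × Fin 8 × Fin 8) :=
  Finset.univ.filter (fun p => p.2.1 < p.2.2)

lemma DD_card : DD.card = 56 := by decide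

lemma Phi_eq (b : Bool) (i j : Fin 8) (hij : i ≠ j) :
    Phi (b, i, j) = vtxV (if b then 1 else -1) i j hij := dif_pos hij

lemma vtx_symm (s : ℝ) (i j : Fin 8) : vtx s i j = vtx s j i := by
  ext k; simp [vtx, or_comm]

lemma vtx_apply_fst (s : ℝ) (i j : Fin 8) : vtx s i j i = s * (3/4) := by
  simp [vtx]

lemma vtx_cond (s : ℝ) (hs : s = 1 ∨ s = -1) (i j k : Fin 8) (hc : ¬(k = i ∨ k = j)) :
    vtx s i j k = s * (-1/4) := by simp [vtx, hc]

lemma vtx_inj (s s' : ℝ) (hs : s = 1 ∨ s = -1) (hs' : s' = 1 ∨ s' = -1)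
    (i j i' j' : Fin 8) (hlt : i < j) (hlt' : i' < j')
    (h : ∀ k, vtx s i j k = vtx s' i' j' k) : s = s' ∧ i = i' ∧ j = j' := by
  have hss : s = s' := by
    rcases hs with rfl | rfl <;> rcases hs' with rfl | rfl <;> try rfl
    · exfalso
      have h1 := h i
      rw [vtx_apply_fst] at h1
      rw [vtx_apply] at h1
      split_ifs at h1 <;> norm_num at h1
    · exfalso
      have h1 := h i
      rw [vtx_apply_fst] at h1
      rw [vtx_apply] at h1
      split_ifs at h1 <;> norm_num at h1
  subst hss
  have hcond : ∀ k, (k = i ∨ k = j) ↔ (k = i' ∨ k = j') := by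
    intro k
    constructor <;> intro hc <;> by_contra hc'
    · have h1 := h k
      rw [vtx_apply, vtx_apply] at h1
      rw [if_pos hc, if_neg hc'] at h1
      rcases hs with rfl | rfl <;> norm_num at h1
    · have h1 := h k
      rw [vtx_apply, vtx_apply] at h1
      rw [if_neg (fun hcc => hc' hcc), if_pos hc] at h1
      rcases hs with rfl | rfl <;> norm_num at h1
  refine ⟨rfl, ?_⟩
  rcases (hcond i).1 (Or.inl rfl) with h1 | h1
  · refine ⟨h1, ?_⟩
    rcases (hcond j).1 (Or.inr rfl) with h2 | h2
    · exfalso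
      have : i = j := by rw [h1, ← h2]
      exact absurd this (ne_of_lt hlt)
    · exact h2
  · exfalso
    rcases (hcond j).1 (Or.inr rfl) with h2 | h2
    · rw [← h2, ← h1] at hlt'
      exact lt_asymm hlt hlt'
    · have : i = j := by rw [h1, ← h2]
      exact absurd this (ne_of_lt hlt)

lemma Sv_eq_image : Sv = Phi '' ↑DD := by
  apply Set.Subset.antisymm
  · intro x hx
    obtain ⟨s, hs, i, j, hij, hk⟩ := Sv_shape x hx
    rcases lt_or_gt_of_ne hij with hlt | hlt
    · refine ⟨(if s = 1 then true else false, i, j), by simp [DD, hlt], ?_⟩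
      rw [Phi_eq _ _ _ hij]
      apply Subtype.ext
      ext k
      show vtx _ i j k = (x : E) k
      rw [hk k]
      rcases hs with rfl | rfl <;> norm_num
    · refine ⟨(if s = 1 then true else false, j, i), by simp [DD, hlt], ?_⟩
      rw [Phi_eq _ _ _ (Ne.symm hij)]
      apply Subtype.ext
      ext k
      show vtx _ j i k = (x : E) k
      rw [hk k, vtx_symm s i j]
      rcases hs with rfl | rfl <;> norm_num
  · rintro - ⟨p, hp, rfl⟩
    obtain ⟨b, i, j⟩ := p
    have hlt : i < j := by simpa [DD] using hp
    rw [Phi_eq _ _ _ (ne_of_lt hlt)]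
    exact vtxV_mem_Sv _ (by cases b <;> simp) i j (ne_of_lt hlt)

lemma Phi_injOn : Set.InjOn Phi ↑DD := by
  rintro ⟨b, i, j⟩ hp ⟨b', i', j'⟩ hp' heq
  have hlt : i < j := by simpa [DD] using hp
  have hlt' : i' < j' := by simpa [DD] using hp'
  have hij := ne_of_lt hlt
  have hij' := ne_of_lt hlt'
  rw [Phi_eq _ _ _ hij, Phi_eq _ _ _ hij'] at heq
  have hfun : ∀ k, vtx (if b then 1 else -1) i j k = vtx (if b' then 1 else -1) i' j' k :=
    fun k => congrArg (fun y : E => y k) (congrArg Subtype.val heq)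
  obtain ⟨hss, hii, hjj⟩ := vtx_inj _ _ (by cases b <;> simp) (by cases b' <;> simp)
    i j i' j' hlt hlt' hfun
  have hbb : b = b' := by
    cases b <;> cases b' <;> first | rfl | (exfalso; norm_num at hss)
  rw [hbb, hii, hjj]

lemma Sv_ncard : Sv.ncard = 56 := by
  rw [Sv_eq_image, Set.ncard_image_of_injOn Phi_injOn, Set.ncard_coe_finset, DD_card]


lemma baseVec_eq (m : Fin 8) :
    baseVec m = if m = 0 ∨ m = 1 then 3/4 else -1/4 := by
  fin_cases m <;>
    simp only [baseVec, Matrix.cons_val_zero, Matrix.cons_val_succ] <;>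
    norm_num [Fin.ext_iff, show ((0:Fin 8):ℕ) = 0 from rfl, show ((1:Fin 8):ℕ) = 1 from rfl, show ((2:Fin 8):ℕ) = 2 from rfl, show ((3:Fin 8):ℕ) = 3 from rfl, show ((4:Fin 8):ℕ) = 4 from rfl, show ((5:Fin 8):ℕ) = 5 from rfl, show ((6:Fin 8):ℕ) = 6 from rfl, show ((7:Fin 8):ℕ) = 7 from rfl]

lemma shape_to_perm (y : E) (s : ℝ) (i j : Fin 8) (hij : i ≠ j)
    (hk : ∀ k, y k = vtx s i j k) :
    ∃ σ : Equiv.Perm (Fin 8), ∀ k, y k = s * baseVec (σ k) := by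
  classical
  set c1 := Equiv.swap i 0 with hc1
  have hc1i : c1 i = 0 := Equiv.swap_apply_left i 0
  have hj1 : c1 j ≠ 0 := by
    intro h
    exact hij (c1.injective (by rw [h, hc1i]))
  set σ := c1.trans (Equiv.swap (c1 j) 1) with hσ
  have hσi : σ i = 0 := by
    show Equiv.swap (c1 j) 1 (c1 i) = 0
    rw [hc1i]
    exact Equiv.swap_apply_of_ne_of_ne (Ne.symm hj1) (by decide)
  have hσj : σ j = 1 := by
    show Equiv.swap (c1 j) 1 (c1 j) = 1
    exact Equiv.swap_apply_left _ _
  refine ⟨σ, fun k => ?_⟩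
  have hiff : (σ k = 0 ∨ σ k = 1) ↔ (k = i ∨ k = j) := by
    rw [← hσi, ← hσj, EmbeddingLike.apply_eq_iff_eq, EmbeddingLike.apply_eq_iff_eq]
  rw [hk k, baseVec_eq, mul_ite]
  rw [vtx_apply]
  rw [if_congr hiff.symm rfl rfl]

lemma perm_to_shape (y : E) (s : ℝ) (σ : Equiv.Perm (Fin 8))
    (h : ∀ k, y k = s * baseVec (σ k)) :
    ∃ i j : Fin 8, i ≠ j ∧ ∀ k, y k = vtx s i j k := by
  refine ⟨σ.symm 0, σ.symm 1, fun hcon => by simpa using σ.symm.injective hcon, fun k => ?_⟩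
  have hiff : (σ k = 0 ∨ σ k = 1) ↔ (k = σ.symm 0 ∨ k = σ.symm 1) := by
    rw [Equiv.apply_eq_iff_eq_symm_apply, Equiv.apply_eq_iff_eq_symm_apply]
  rw [h k, baseVec_eq, mul_ite]
  rw [vtx_apply]
  rw [if_congr hiff rfl rfl]


theorem E7_orbit_of_a
    (A : Set V7) (hA : A = {x : V7 | ∃ w ∈ W7, w aV = x}) :
    A.ncard = 56 ∧
    ∀ x : V7, x ∈ A ↔ ∃ σ : Equiv.Perm (Fin 8), ∃ s : ℝ, (s = 1 ∨ s = -1) ∧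
      ∀ i : Fin 8, (x : EuclideanSpace ℝ (Fin 8)) i = s * baseVec (σ i) := by
  have hA' : A = Sv := by rw [hA]; exact Orb_eq_Sv
  constructor
  · rw [hA']; exact Sv_ncard
  · intro x
    rw [hA']
    constructor
    · intro hx
      obtain ⟨s, hs, i, j, hij, hk⟩ := Sv_shape x hx
      obtain ⟨σ, hσ⟩ := shape_to_perm (x : E) s i j hij hk
      exact ⟨σ, s, hs, hσ⟩
    · rintro ⟨σ, s, hs, hσ⟩
      obtain ⟨i, j, hij, hk⟩ := perm_to_shape (x : E) s σ hσ
      have : x = vtxV s i j hij := Subtype.ext (PiLp.ext hk)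
      rw [this]
      exact vtxV_mem_Sv s hs i j hij
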